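/- Let $V$ be a real inner product space and let $\gamma_1,\ldots,\gamma_k \in V$ ($k\ge1$) be nonzero and pairwise orthogonal. For a nonzero $\gamma \in V$ let $r_\gamma$ denote the orthogonal reflection $r_\gamma(v)=v-\frac{2\langle \gamma,v\rangle}{\langle\gamma,\gamma\rangle}\gamma$. Then for every $v\in V$: $\langle v,\ (r_{\gamma_2}\circ\cdots\circ r_{\gamma_k})(v)\rangle - \langle v,\ (r_{\gamma_1}\circ r_{\gamma_2}\circ\cdots\circ r_{\gamma_k})(v)\rangle = \frac{2\langle\gamma_1,v\rangle^2}{\langle\gamma_1,\gamma_1\rangle}$ (where for $k=1$ the composition $r_{\gamma_2}\circ\cdots\circ r_{\gamma_k}$ is the identity). (The key computation in the proof of Lemma 2.3.) -/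

import Mathlib

open scoped RealInnerProductSpace

noncomputable section

variable {V : Type*} [NormedAddCommGroup V] [InnerProductSpace ℝ V]

/-- The orthogonal reflection in the hyperplane orthogonal to `γ`:
`r_γ(v) = v - (2⟨γ,v⟩/⟨γ,γ⟩) γ`. -/
def reflect (γ : V) (v : V) : V := v - (2 * ⟪γ, v⟫ / ⟪γ, γ⟫) • γ

/-- The composition `r_{l₁} ∘ r_{l₂} ∘ ⋯ ∘ r_{lₙ}` of the reflections in the
entries of a list `l = [l₁, …, lₙ]` (the identity for the empty list). -/
def compReflect (l : List V) : V → V := l.foldr (fun γ f => reflect γ ∘ f) id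

lemma compReflect_cons (γ : V) (l : List V) (v : V) :
    compReflect (γ :: l) v = reflect γ (compReflect l v) := rfl

lemma inner_compReflect (u : V) (l : List V) (h : ∀ x ∈ l, ⟪u, x⟫ = 0) (v : V) :
    ⟪u, compReflect l v⟫ = ⟪u, v⟫ := by
  induction l with
  | nil => rfl
  | cons γ l ih =>
    rw [compReflect_cons, reflect, inner_sub_right, inner_smul_right,
      h γ List.mem_cons_self, mul_zero, sub_zero]
    exact ih fun x hx => h x (List.mem_cons_of_mem _ hx)

/-- The key computation in the proof of Lemma 2.3: for nonzero pairwise orthogonal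
`γ₁, …, γₖ` and any `v`,
`⟨v, r_{γ₂}⋯r_{γₖ} v⟩ - ⟨v, r_{γ₁}r_{γ₂}⋯r_{γₖ} v⟩ = 2⟨γ₁,v⟩²/⟨γ₁,γ₁⟩`. -/
theorem stmt_14 (k : ℕ) (hk : 0 < k) (γ : Fin k → V)
    (hne : ∀ i, γ i ≠ 0)
    (horth : ∀ i j, i ≠ j → ⟪γ i, γ j⟫ = 0) (v : V) :
    ⟪v, compReflect (List.ofFn γ).tail v⟫ - ⟪v, compReflect (List.ofFn γ) v⟫
      = 2 * ⟪γ ⟨0, hk⟩, v⟫ ^ 2 / ⟪γ ⟨0, hk⟩, γ ⟨0, hk⟩⟫ := by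
  obtain ⟨n, rfl⟩ : ∃ n, k = n + 1 := ⟨k - 1, (Nat.succ_pred_eq_of_pos hk).symm⟩
  have h0 : (⟨0, hk⟩ : Fin (n + 1)) = 0 := rfl
  rw [h0, List.ofFn_succ]
  set w := compReflect (List.ofFn fun i : Fin n => γ i.succ) v with hw
  have htail : (γ 0 :: List.ofFn fun i : Fin n => γ i.succ).tail
      = List.ofFn fun i : Fin n => γ i.succ := rfl
  rw [htail, compReflect_cons, reflect, inner_sub_right, inner_smul_right]
  have hγw : ⟪γ 0, w⟫ = ⟪γ 0, v⟫ := by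
    apply inner_compReflect
    intro x hx
    simp only [List.mem_ofFn] at hx
    obtain ⟨i, rfl⟩ := hx
    exact horth 0 i.succ (Fin.succ_ne_zero i).symm
  rw [hγw]
  have hvγ : ⟪v, γ 0⟫ = ⟪γ 0, v⟫ := real_inner_comm _ _
  ring_nf
  rw [hvγ]
  ring
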